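/- Let a, b, c be nonzero integers such that −ab is not a perfect square and gcd(a, b, c) = 1. Then X, Y ∈ M₂(ℤ) satisfy aX² + bY² = cI and XY = YX if and only if one of the following holds: (i) X = t₁I and Y = t₂I for integers t₁, t₂ with a·t₁² + b·t₂² = c; (ii) X = t₁I and Y = [[t₄, t₂],[t₃, −t₄]] for integers t₁, t₂, t₃, t₄ with a·t₁² + b(t₄² + t₂t₃) = c; (iii) there exist integers t₁, t₂, t₃, t₄, u, v, k with u ≠ c, g = gcd(va, u − c), such that X = t₁I + ((u − c)/g)·[[0, t₂],[t₃, −k]] and Y = t₄I + (va/g)·[[0, t₂],[t₃, −k]], and the relations u² + abv² = c², g²(a·t₁² + b·t₄²) + 2ac·t₂t₃·(c − u) = c·g², and (g·t₁ + c·k)(u − c) + v·b·g·t₄ = 0 all hold. -/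

import Mathlib

-- parallel vector extraction
lemma par3 (A B : Fin 3 → ℤ) (j : Fin 3) (hj : A j ≠ 0) (hB : B ≠ 0)
    (h : ∀ i, A j * B i = B j * A i) :
    ∃ p q : ℤ, ∃ n : Fin 3 → ℤ, Int.gcd p q = 1 ∧ p ≠ 0 ∧ q ≠ 0 ∧ ∀ i, A i = p * n i ∧ B i = q * n i := by
  have hgpos : 0 < Int.gcd (A j) (B j) := Int.gcd_pos_iff.mpr (Or.inl hj)
  set d : ℤ := (Int.gcd (A j) (B j) : ℤ) with hd
  have hd0 : d ≠ 0 := by positivity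
  set p := A j / d with hpdef
  set q := B j / d with hqdef
  have hpd : d * p = A j := Int.mul_ediv_cancel' (Int.gcd_dvd_left _ _)
  have hqd : d * q = B j := Int.mul_ediv_cancel' (Int.gcd_dvd_right _ _)
  have hcop : Int.gcd p q = 1 := Int.gcd_div_gcd_div_gcd hgpos
  have hp0 : p ≠ 0 := by
    intro h0; rw [h0, mul_zero] at hpd; exact hj hpd.symm
  have hq0 : q ≠ 0 := by
    intro h0
    rw [h0, mul_zero] at hqd
    apply hB
    funext i
    have := h i
    rw [← hqd, zero_mul] at this
    have : A j * B i = 0 := this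
    simpa using (mul_eq_zero.mp this).resolve_left hj
  have key : ∀ i, p * B i = q * A i := by
    intro i
    have := h i
    rw [← hpd, ← hqd] at this
    have h2 : d * (p * B i) = d * (q * A i) := by ring_nf; ring_nf at this; linarith
    exact mul_left_cancel₀ hd0 h2
  have hcop' : IsCoprime p q := Int.isCoprime_iff_gcd_eq_one.mpr hcop
  refine ⟨p, q, fun i => A i / p, hcop, hp0, hq0, fun i => ?_⟩
  have hdvd : p ∣ A i := by
    have : p ∣ q * A i := ⟨B i, (key i).symm⟩
    exact (IsCoprime.dvd_of_dvd_mul_left hcop' this)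
  have hA : p * (A i / p) = A i := Int.mul_ediv_cancel' hdvd
  refine ⟨hA.symm, ?_⟩
  have h3 : p * B i = p * (q * (A i / p)) :=
    calc p * B i = q * A i := key i
      _ = q * (p * (A i / p)) := by rw [hA]
      _ = p * (q * (A i / p)) := by ring
  exact mul_left_cancel₀ hp0 h3

-- nonzero D
lemma Dne (a b p q : ℤ) (hq : q ≠ 0) (hnsq : ¬ ∃ s : ℤ, -(a * b) = s ^ 2)
    (h0 : a * p ^ 2 + b * q ^ 2 = 0) : False := by
  have h1 : (a * p) ^ 2 = (-(a * b)) * q ^ 2 := by linear_combination a * h0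
  have hdvd : q ^ 2 ∣ (a * p) ^ 2 := ⟨-(a*b), by linarith [h1]⟩
  have hq' : q ∣ a * p := (Int.pow_dvd_pow_iff (two_ne_zero)).mp hdvd
  obtain ⟨s, hs⟩ := hq'
  apply hnsq
  refine ⟨s, ?_⟩
  have hq2 : q ^ 2 ≠ 0 := pow_ne_zero _ hq
  have : (-(a*b)) * q ^ 2 = s ^ 2 * q ^ 2 := by rw [← h1, hs]; ring
  exact mul_right_cancel₀ hq2 this

-- constructor for case (iii)
lemma case3 (a b c t₁ t₄ p q n₂ n₃ n₄ g v : ℤ) (X Y : Matrix (Fin 2) (Fin 2) ℤ)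
    (ha : a ≠ 0) (hp : p ≠ 0) (hcop : Int.gcd p q = 1)
    (hgpos : 0 < g) (hg : g * (a * p ^ 2 + b * q ^ 2) = -(2 * a * c * p))
    (hv : v * a = q * g)
    (hE1 : a * t₁ ^ 2 + b * t₄ ^ 2 + (a * p ^ 2 + b * q ^ 2) * n₂ * n₃ = c)
    (hE2 : 2 * a * t₁ * p + 2 * b * t₄ * q + (a * p ^ 2 + b * q ^ 2) * n₄ = 0)
    (hX : X = t₁ • (1 : Matrix (Fin 2) (Fin 2) ℤ) + p • !![0, n₂; n₃, n₄])
    (hY : Y = t₄ • (1 : Matrix (Fin 2) (Fin 2) ℤ) + q • !![0, n₂; n₃, n₄]) :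
    (∃ t₁' t₂ t₃ t₄' u v' k g' : ℤ, u ≠ c ∧ g' = Int.gcd (v' * a) (u - c) ∧
        X = t₁' • (1 : Matrix (Fin 2) (Fin 2) ℤ) + ((u - c) / g') • !![0, t₂; t₃, -k] ∧
        Y = t₄' • (1 : Matrix (Fin 2) (Fin 2) ℤ) + ((v' * a) / g') • !![0, t₂; t₃, -k] ∧
        u ^ 2 + a * b * v' ^ 2 = c ^ 2 ∧
        g' ^ 2 * (a * t₁' ^ 2 + b * t₄' ^ 2) + 2 * a * c * t₂ * t₃ * (c - u) = c * g' ^ 2 ∧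
        (g' * t₁' + c * k) * (u - c) + v' * b * g' * t₄' = 0) := by
  have hg0 : g ≠ 0 := ne_of_gt hgpos
  refine ⟨t₁, n₂, n₃, t₄, c + p * g, v, -n₄, g, ?_, ?_, ?_, ?_, ?_, ?_, ?_⟩
  · intro hEq
    have : p * g = 0 := by linarith
    exact (mul_ne_zero hp hg0) this
  · have h1 : c + p * g - c = p * g := by ring
    rw [h1, hv]
    rw [Int.gcd_mul_right]
    rw [Int.gcd_comm q p, hcop]
    simp [Int.natAbs_of_nonneg (le_of_lt hgpos)]
  · have h1 : c + p * g - c = p * g := by ring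
    rw [h1, Int.mul_ediv_cancel _ hg0, neg_neg]
    exact hX
  · rw [hv, Int.mul_ediv_cancel _ hg0, neg_neg]
    exact hY
  · have key : a * ((c + p * g) ^ 2 + a * b * v ^ 2 - c ^ 2) = 0 := by
      linear_combination g * hg + b * (v * a + q * g) * hv
    have := (mul_eq_zero.mp key).resolve_left ha
    linarith
  · linear_combination g ^ 2 * hE1 - g * n₂ * n₃ * hg
  · have key : 2 * a * ((g * t₁ + c * -n₄) * (c + p * g - c) + v * b * g * t₄) = 0 := by
      linear_combination g ^ 2 * hE2 - g * n₄ * hg + 2 * b * g * t₄ * hv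
    have h2 : (2 * a) ≠ 0 := by
      simp [ha]
    have := (mul_eq_zero.mp key).resolve_left h2
    linarith

lemma rev3 (a b c t₁ t₂ t₃ t₄ u v k g : ℤ) (X Y : Matrix (Fin 2) (Fin 2) ℤ)
    (hu : u ≠ c) (hg : g = (Int.gcd (v * a) (u - c) : ℤ))
    (hX : X = t₁ • (1 : Matrix (Fin 2) (Fin 2) ℤ) + ((u - c) / g) • !![0, t₂; t₃, -k])
    (hY : Y = t₄ • (1 : Matrix (Fin 2) (Fin 2) ℤ) + ((v * a) / g) • !![0, t₂; t₃, -k])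
    (r1 : u ^ 2 + a * b * v ^ 2 = c ^ 2)
    (r2 : g ^ 2 * (a * t₁ ^ 2 + b * t₄ ^ 2) + 2 * a * c * t₂ * t₃ * (c - u) = c * g ^ 2)
    (r3 : (g * t₁ + c * k) * (u - c) + v * b * g * t₄ = 0) :
    a • X ^ 2 + b • Y ^ 2 = c • (1 : Matrix (Fin 2) (Fin 2) ℤ) ∧ X * Y = Y * X := by
  have hgpos : 0 < g := by
    rw [hg]
    exact_mod_cast Int.gcd_pos_iff.mpr (Or.inr (sub_ne_zero.mpr hu))
  have hg0 : g ≠ 0 := ne_of_gt hgpos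
  have hdp : g ∣ u - c := hg ▸ Int.gcd_dvd_right (v * a) (u - c)
  have hdq : g ∣ v * a := hg ▸ Int.gcd_dvd_left (v * a) (u - c)
  obtain ⟨p, hp⟩ := hdp
  obtain ⟨q, hq⟩ := hdq
  rw [hp, Int.mul_ediv_cancel_left _ hg0] at hX
  rw [hq, Int.mul_ediv_cancel_left _ hg0] at hY
  have kD : g ^ 2 * (a * p ^ 2 + b * q ^ 2) = -(2 * a * c * (u - c)) := by
    linear_combination a * r1 - a * (u - c + g * p) * hp - b * (v * a + g * q) * hq
  have kS : g ^ 2 * (2 * a * t₁ * p + 2 * b * t₄ * q - k * (a * p ^ 2 + b * q ^ 2)) = 0 := by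
    linear_combination 2 * a * r3 - 2 * a * (g * t₁ + c * k) * hp - 2 * b * t₄ * g * hq - k * kD + 2 * a * c * k * hp
  have hgg : g ^ 2 ≠ 0 := pow_ne_zero 2 hg0
  have s00 : a * (t₁ ^ 2 + p ^ 2 * t₂ * t₃) + b * (t₄ ^ 2 + q ^ 2 * t₂ * t₃) = c := by
    apply mul_left_cancel₀ hgg
    linear_combination r2 + t₂ * t₃ * kD
  have s01 : 2 * a * t₁ * p + 2 * b * t₄ * q - k * (a * p ^ 2 + b * q ^ 2) = 0 := by
    apply mul_left_cancel₀ hgg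
    rw [mul_zero]
    exact kS
  have s11 : a * ((t₁ - p * k) ^ 2 + p ^ 2 * t₂ * t₃) + b * ((t₄ - q * k) ^ 2 + q ^ 2 * t₂ * t₃) = c := by
    linear_combination s00 - k * s01
  subst hX hY
  constructor
  · ext i j
    fin_cases i <;> fin_cases j <;>
      simp only [pow_two, Matrix.add_apply, Matrix.smul_apply, Matrix.mul_apply,
        Fin.sum_univ_two, Matrix.one_apply, smul_eq_mul, Matrix.cons_val', Matrix.cons_val_zero,
        Matrix.cons_val_one, Matrix.head_cons, Matrix.empty_val', Matrix.cons_val_fin_one,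
        Matrix.head_fin_const] <;> simp
    · linear_combination s00
    · linear_combination t₂ * s01
    · linear_combination t₃ * s01
    · linear_combination s11
  · simp only [add_mul, mul_add, Matrix.smul_mul, Matrix.mul_smul, smul_smul,
      Matrix.one_mul, Matrix.mul_one]
    match_scalars <;> ring


-- helper: matrix from entries
lemma mk_eq (X : Matrix (Fin 2) (Fin 2) ℤ) (t p n₂ n₃ n₄ : ℤ)
    (h0 : X 0 0 = t) (h1 : X 0 1 = p * n₂) (h2 : X 1 0 = p * n₃) (h3 : X 1 1 = t + p * n₄) :
    X = t • (1 : Matrix (Fin 2) (Fin 2) ℤ) + p • !![0, n₂; n₃, n₄] := by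
  ext i j
  fin_cases i <;> fin_cases j <;>
    simp only [Matrix.add_apply, Matrix.smul_apply, Matrix.one_apply, smul_eq_mul,
      Matrix.cons_val', Matrix.cons_val_zero, Matrix.cons_val_one, Matrix.head_cons,
      Matrix.empty_val', Matrix.cons_val_fin_one, Matrix.head_fin_const] <;>
    simp [h0, h1, h2, h3]

lemma flip_eq (t p n₂ n₃ n₄ : ℤ) :
    t • (1 : Matrix (Fin 2) (Fin 2) ℤ) + p • !![0, n₂; n₃, n₄]
      = t • (1 : Matrix (Fin 2) (Fin 2) ℤ) + (-p) • !![0, -n₂; -n₃, -n₄] := by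
  ext i j
  fin_cases i <;> fin_cases j <;>
    simp [Matrix.one_apply] <;> ring


theorem stmt_11 (a b c : ℤ) (ha : a ≠ 0) (hb : b ≠ 0) (hc : c ≠ 0)
    (hnsq : ¬ ∃ s : ℤ, -(a * b) = s ^ 2) (hgcd : Int.gcd a (Int.gcd b c) = 1)
    (X Y : Matrix (Fin 2) (Fin 2) ℤ) :
    (a • X ^ 2 + b • Y ^ 2 = c • (1 : Matrix (Fin 2) (Fin 2) ℤ) ∧ X * Y = Y * X) ↔
    ((∃ t₁ t₂ : ℤ, X = t₁ • (1 : Matrix (Fin 2) (Fin 2) ℤ) ∧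
        Y = t₂ • (1 : Matrix (Fin 2) (Fin 2) ℤ) ∧ a * t₁ ^ 2 + b * t₂ ^ 2 = c) ∨
     (∃ t₁ t₂ t₃ t₄ : ℤ, X = t₁ • (1 : Matrix (Fin 2) (Fin 2) ℤ) ∧
        Y = !![t₄, t₂; t₃, -t₄] ∧ a * t₁ ^ 2 + b * (t₄ ^ 2 + t₂ * t₃) = c) ∨
     (∃ t₁ t₂ t₃ t₄ u v k g : ℤ, u ≠ c ∧ g = Int.gcd (v * a) (u - c) ∧
        X = t₁ • (1 : Matrix (Fin 2) (Fin 2) ℤ) + ((u - c) / g) • !![0, t₂; t₃, -k] ∧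
        Y = t₄ • (1 : Matrix (Fin 2) (Fin 2) ℤ) + ((v * a) / g) • !![0, t₂; t₃, -k] ∧
        u ^ 2 + a * b * v ^ 2 = c ^ 2 ∧
        g ^ 2 * (a * t₁ ^ 2 + b * t₄ ^ 2) + 2 * a * c * t₂ * t₃ * (c - u) = c * g ^ 2 ∧
        (g * t₁ + c * k) * (u - c) + v * b * g * t₄ = 0)) := by
  constructor
  · rintro ⟨hM, hCm⟩
    have e00 : a * (X 0 0 * X 0 0 + X 0 1 * X 1 0) + b * (Y 0 0 * Y 0 0 + Y 0 1 * Y 1 0) = c := by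
      have h := congrFun (congrFun hM 0) 0
      simp only [pow_two, Matrix.add_apply, Matrix.smul_apply, Matrix.mul_apply,
        Fin.sum_univ_two, Matrix.one_apply, smul_eq_mul] at h
      simpa using h
    have e01 : a * (X 0 0 * X 0 1 + X 0 1 * X 1 1) + b * (Y 0 0 * Y 0 1 + Y 0 1 * Y 1 1) = 0 := by
      have h := congrFun (congrFun hM 0) 1
      simp only [pow_two, Matrix.add_apply, Matrix.smul_apply, Matrix.mul_apply,
        Fin.sum_univ_two, Matrix.one_apply, smul_eq_mul] at h
      simpa using h
    have e10 : a * (X 1 0 * X 0 0 + X 1 1 * X 1 0) + b * (Y 1 0 * Y 0 0 + Y 1 1 * Y 1 0) = 0 := by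
      have h := congrFun (congrFun hM 1) 0
      simp only [pow_two, Matrix.add_apply, Matrix.smul_apply, Matrix.mul_apply,
        Fin.sum_univ_two, Matrix.one_apply, smul_eq_mul] at h
      simpa using h
    have e11 : a * (X 1 0 * X 0 1 + X 1 1 * X 1 1) + b * (Y 1 0 * Y 0 1 + Y 1 1 * Y 1 1) = c := by
      have h := congrFun (congrFun hM 1) 1
      simp only [pow_two, Matrix.add_apply, Matrix.smul_apply, Matrix.mul_apply,
        Fin.sum_univ_two, Matrix.one_apply, smul_eq_mul] at h
      simpa using h
    have c00 : X 0 0 * Y 0 0 + X 0 1 * Y 1 0 = Y 0 0 * X 0 0 + Y 0 1 * X 1 0 := by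
      have h := congrFun (congrFun hCm 0) 0
      simpa only [Matrix.mul_apply, Fin.sum_univ_two] using h
    have c01 : X 0 0 * Y 0 1 + X 0 1 * Y 1 1 = Y 0 0 * X 0 1 + Y 0 1 * X 1 1 := by
      have h := congrFun (congrFun hCm 0) 1
      simpa only [Matrix.mul_apply, Fin.sum_univ_two] using h
    have c10 : X 1 0 * Y 0 0 + X 1 1 * Y 1 0 = Y 1 0 * X 0 0 + Y 1 1 * X 1 0 := by
      have h := congrFun (congrFun hCm 1) 0
      simpa only [Matrix.mul_apply, Fin.sum_univ_two] using h
    by_cases hA : X 0 1 = 0 ∧ X 1 0 = 0 ∧ X 1 1 = X 0 0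
    · obtain ⟨hx1, hx2, hx3⟩ := hA
      rw [hx1] at e00 e01
      rw [hx2] at e10
      by_cases hT : Y 0 0 + Y 1 1 = 0
      · right; left
        refine ⟨X 0 0, Y 0 1, Y 1 0, Y 0 0, ?_, ?_, ?_⟩
        · ext i j
          fin_cases i <;> fin_cases j <;>
            simp [Matrix.one_apply, hx1, hx2, hx3]
        · ext i j
          fin_cases i <;> fin_cases j <;> simp
          omega
        · linear_combination e00
      · have hy1 : Y 0 1 = 0 := by
          have h1 : b * (Y 0 1 * (Y 0 0 + Y 1 1)) = 0 := by linear_combination e01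
          have h2 := (mul_eq_zero.mp h1).resolve_left hb
          exact (mul_eq_zero.mp h2).resolve_right hT
        have hy2 : Y 1 0 = 0 := by
          have h1 : b * (Y 1 0 * (Y 0 0 + Y 1 1)) = 0 := by linear_combination e10
          have h2 := (mul_eq_zero.mp h1).resolve_left hb
          exact (mul_eq_zero.mp h2).resolve_right hT
        rw [hy1] at e00
        rw [hx1, hx2, hx3, hy1, hy2] at e11
        have hy3 : Y 1 1 = Y 0 0 := by
          have h1 : b * ((Y 1 1 - Y 0 0) * (Y 1 1 + Y 0 0)) = 0 := by
            linear_combination e11 - e00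
          have h2 := (mul_eq_zero.mp h1).resolve_left hb
          have h3 : Y 1 1 + Y 0 0 ≠ 0 := by intro h; apply hT; linarith
          have := (mul_eq_zero.mp h2).resolve_right h3
          linarith
        left
        refine ⟨X 0 0, Y 0 0, ?_, ?_, ?_⟩
        · ext i j
          fin_cases i <;> fin_cases j <;> simp [Matrix.one_apply, hx1, hx2, hx3]
        · ext i j
          fin_cases i <;> fin_cases j <;> simp [Matrix.one_apply, hy1, hy2, hy3]
        · linear_combination e00
    · right; right
      by_cases hB : Y 0 1 = 0 ∧ Y 1 0 = 0 ∧ Y 1 1 = Y 0 0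
      · -- Y scalar, X traceless
        obtain ⟨hy1, hy2, hy3⟩ := hB
        rw [hy1] at e00 e01
        rw [hy2] at e10
        have hsum : X 1 1 = -(X 0 0) := by
          by_contra hs
          have hs' : X 0 0 + X 1 1 ≠ 0 := fun h => hs (by linarith)
          have hx1 : X 0 1 = 0 := by
            have h1 : a * (X 0 1 * (X 0 0 + X 1 1)) = 0 := by linear_combination e01
            have h2 := (mul_eq_zero.mp h1).resolve_left ha
            exact (mul_eq_zero.mp h2).resolve_right hs'
          have hx2 : X 1 0 = 0 := by
            have h1 : a * (X 1 0 * (X 0 0 + X 1 1)) = 0 := by linear_combination e10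
            have h2 := (mul_eq_zero.mp h1).resolve_left ha
            exact (mul_eq_zero.mp h2).resolve_right hs'
          have hx3 : X 1 1 = X 0 0 := by
            rw [hx1] at e00
            rw [hx1, hx2, hy2, hy3, hy1] at e11
            have h1 : a * ((X 1 1 - X 0 0) * (X 1 1 + X 0 0)) = 0 := by
              linear_combination e11 - e00
            have h2 := (mul_eq_zero.mp h1).resolve_left ha
            have h3 : X 1 1 + X 0 0 ≠ 0 := fun h => hs' (by linarith)
            have := (mul_eq_zero.mp h2).resolve_right h3
            linarith
          exact hA ⟨hx1, hx2, hx3⟩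
        rcases hc.lt_or_gt with hcneg | hcpos
        · -- c < 0 : take p = 1, g = -2c
          refine case3 a b c (X 0 0) (Y 0 0) 1 0 (X 0 1) (X 1 0) (-2 * X 0 0) (-2 * c) 0 X Y
            ha one_ne_zero (by simp) (by linarith) (by ring) (by ring)
            (by linear_combination e00) (by ring) ?_ ?_
          · exact mk_eq X (X 0 0) 1 (X 0 1) (X 1 0) (-2 * X 0 0) rfl (by ring) (by ring)
              (by linear_combination hsum)
          · exact mk_eq Y (Y 0 0) 0 (X 0 1) (X 1 0) (-2 * X 0 0) rfl (by simpa using hy1)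
              (by simpa using hy2) (by linear_combination hy3)
        · -- c > 0 : take p = -1, g = 2c
          refine case3 a b c (X 0 0) (Y 0 0) (-1) 0 (-(X 0 1)) (-(X 1 0)) (2 * X 0 0) (2 * c) 0 X Y
            ha (by norm_num) (by simp) (by linarith) (by ring) (by ring)
            (by linear_combination e00) (by ring) ?_ ?_
          · exact mk_eq X (X 0 0) (-1) (-(X 0 1)) (-(X 1 0)) (2 * X 0 0) rfl (by ring) (by ring)
              (by linear_combination hsum)
          · exact mk_eq Y (Y 0 0) 0 (-(X 0 1)) (-(X 1 0)) (2 * X 0 0) rfl (by simpa using hy1)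
              (by simpa using hy2) (by linear_combination hy3)
      · -- general case
        have m23 : X 0 1 * Y 1 0 = X 1 0 * Y 0 1 := by linear_combination c00
        have m24 : X 0 1 * (Y 1 1 - Y 0 0) = (X 1 1 - X 0 0) * Y 0 1 := by linear_combination c01
        have m34 : X 1 0 * (Y 1 1 - Y 0 0) = (X 1 1 - X 0 0) * Y 1 0 := by linear_combination -c10
        set A : Fin 3 → ℤ := ![X 0 1, X 1 0, X 1 1 - X 0 0] with hAdef
        set B : Fin 3 → ℤ := ![Y 0 1, Y 1 0, Y 1 1 - Y 0 0] with hBdef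
        have hBne : B ≠ 0 := by
          intro h0
          apply hB
          have h1 := congrFun h0 0
          have h2 := congrFun h0 1
          have h3 := congrFun h0 2
          simp [hBdef] at h1 h2 h3
          exact ⟨h1, h2, by linarith [sub_eq_zero.mpr h3]⟩
        have hAj : A 0 ≠ 0 ∨ A 1 ≠ 0 ∨ A 2 ≠ 0 := by
          by_contra h0
          push_neg at h0
          apply hA
          obtain ⟨h1, h2, h3⟩ := h0
          simp [hAdef] at h1 h2 h3
          exact ⟨h1, h2, by linarith⟩
        have hpar : ∃ j, A j ≠ 0 ∧ ∀ i, A j * B i = B j * A i := by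
          rcases hAj with hj | hj | hj
          · exact ⟨0, hj, fun i => by
              fin_cases i <;> simp [hAdef, hBdef] <;>
                first
                  | linear_combination m23 | linear_combination -m23
                  | linear_combination m24 | linear_combination -m24
                  | linear_combination m34 | linear_combination -m34 | ring⟩
          · exact ⟨1, hj, fun i => by
              fin_cases i <;> simp [hAdef, hBdef] <;>
                first
                  | linear_combination m23 | linear_combination -m23
                  | linear_combination m24 | linear_combination -m24
                  | linear_combination m34 | linear_combination -m34 | ring⟩
          · exact ⟨2, hj, fun i => by
              fin_cases i <;> simp [hAdef, hBdef] <;>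
                first
                  | linear_combination m23 | linear_combination -m23
                  | linear_combination m24 | linear_combination -m24
                  | linear_combination m34 | linear_combination -m34 | ring⟩
        obtain ⟨j, hj, hh⟩ := hpar
        obtain ⟨p, q, n, hcop, hp0, hq0, hn⟩ := par3 A B j hj hBne hh
        have ha2 : X 0 1 = p * n 0 := by simpa [hAdef] using (hn 0).1
        have ha3 : X 1 0 = p * n 1 := by simpa [hAdef] using (hn 1).1
        have ha4 : X 1 1 = X 0 0 + p * n 2 := by
          have := (hn 2).1
          simp [hAdef] at this
          linarith
        have hb2 : Y 0 1 = q * n 0 := by simpa [hBdef] using (hn 0).2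
        have hb3 : Y 1 0 = q * n 1 := by simpa [hBdef] using (hn 1).2
        have hb4 : Y 1 1 = Y 0 0 + q * n 2 := by
          have := (hn 2).2
          simp [hBdef] at this
          linarith
        rw [ha2] at e00 e01 e11
        rw [ha3] at e00 e10 e11
        rw [ha4] at e01 e10 e11
        rw [hb2] at e00 e01 e11
        rw [hb3] at e00 e10 e11
        rw [hb4] at e01 e10 e11
        have hE1 : a * (X 0 0) ^ 2 + b * (Y 0 0) ^ 2
            + (a * p ^ 2 + b * q ^ 2) * n 0 * n 1 = c := by linear_combination e00
        have hnz : n 0 ≠ 0 ∨ n 1 ≠ 0 ∨ n 2 ≠ 0 := by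
          by_contra h0
          push_neg at h0
          obtain ⟨h1, h2, h3⟩ := h0
          exact hA ⟨by rw [ha2, h1, mul_zero], by rw [ha3, h2, mul_zero],
            by rw [ha4, h3, mul_zero, add_zero]⟩
        have hE2 : 2 * a * X 0 0 * p + 2 * b * Y 0 0 * q + (a * p ^ 2 + b * q ^ 2) * n 2 = 0 := by
          rcases hnz with h | h | h
          · have h1 : n 0 * (2 * a * X 0 0 * p + 2 * b * Y 0 0 * q + (a * p ^ 2 + b * q ^ 2) * n 2) = 0 := by
              linear_combination e01
            exact (mul_eq_zero.mp h1).resolve_left h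
          · have h1 : n 1 * (2 * a * X 0 0 * p + 2 * b * Y 0 0 * q + (a * p ^ 2 + b * q ^ 2) * n 2) = 0 := by
              linear_combination e10
            exact (mul_eq_zero.mp h1).resolve_left h
          · have h1 : n 2 * (2 * a * X 0 0 * p + 2 * b * Y 0 0 * q + (a * p ^ 2 + b * q ^ 2) * n 2) = 0 := by
              linear_combination e11 - e00
            exact (mul_eq_zero.mp h1).resolve_left h
        have hD : a * p ^ 2 + b * q ^ 2 ≠ 0 := fun h0 => Dne a b p q hq0 hnsq h0
        -- divisibility
        have hdp : (a * p ^ 2 + b * q ^ 2) ∣ p * (2 * a * b * (p * Y 0 0 - q * X 0 0)) :=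
          ⟨2 * b * Y 0 0 + b * q * n 2, by linear_combination (-(b * q)) * hE2⟩
        have hdq : (a * p ^ 2 + b * q ^ 2) ∣ q * (2 * a * b * (p * Y 0 0 - q * X 0 0)) :=
          ⟨-(2 * a * X 0 0 + a * p * n 2), by linear_combination a * p * hE2⟩
        have hcop' : IsCoprime p q := Int.isCoprime_iff_gcd_eq_one.mpr hcop
        obtain ⟨α, β, hαβ⟩ := hcop'
        have hdw : (a * p ^ 2 + b * q ^ 2) ∣ 2 * a * b * (p * Y 0 0 - q * X 0 0) := by
          have : 2 * a * b * (p * Y 0 0 - q * X 0 0)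
              = α * (p * (2 * a * b * (p * Y 0 0 - q * X 0 0)))
                + β * (q * (2 * a * b * (p * Y 0 0 - q * X 0 0))) := by
            linear_combination (-(2 * a * b * (p * Y 0 0 - q * X 0 0))) * hαβ
          rw [this]
          exact dvd_add (Dvd.dvd.mul_left hdp α) (Dvd.dvd.mul_left hdq β)
        obtain ⟨h, hh2⟩ := hdw
        set g0 : ℤ := a * X 0 0 * n 2 - 2 * a * p * n 0 * n 1 - Y 0 0 * h with hg0def
        have hg0D : g0 * (a * p ^ 2 + b * q ^ 2) = -(2 * a * c * p) := by
          linear_combination (-(2 * a * p)) * hE1 + (a * X 0 0) * hE2 + Y 0 0 * hh2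
        have hv0D : (2 * X 0 0 * Y 0 0 + (q * X 0 0 + p * Y 0 0) * n 2 - 2 * p * q * n 0 * n 1)
            * (a * p ^ 2 + b * q ^ 2) = -(2 * c * p * q) := by
          linear_combination (-(2 * p * q)) * hE1 + (q * X 0 0 + p * Y 0 0) * hE2
        set v0 : ℤ := 2 * X 0 0 * Y 0 0 + (q * X 0 0 + p * Y 0 0) * n 2 - 2 * p * q * n 0 * n 1 with hv0def
        have hv0 : v0 * a = q * g0 := by
          apply mul_right_cancel₀ hD
          linear_combination a * hv0D - q * hg0D
        have hg0ne : g0 ≠ 0 := by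
          intro h0
          rw [h0, zero_mul] at hg0D
          have : 2 * a * c * p ≠ 0 := by
            apply mul_ne_zero (mul_ne_zero (mul_ne_zero two_ne_zero ha) hc) hp0
          omega
        have hXeq : X = X 0 0 • (1 : Matrix (Fin 2) (Fin 2) ℤ) + p • !![0, n 0; n 1, n 2] :=
          mk_eq X (X 0 0) p (n 0) (n 1) (n 2) rfl ha2 ha3 ha4
        have hYeq : Y = Y 0 0 • (1 : Matrix (Fin 2) (Fin 2) ℤ) + q • !![0, n 0; n 1, n 2] :=
          mk_eq Y (Y 0 0) q (n 0) (n 1) (n 2) rfl hb2 hb3 hb4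
        rcases hg0ne.lt_or_gt with hneg | hpos
        · have hXeq' : X = X 0 0 • (1 : Matrix (Fin 2) (Fin 2) ℤ)
              + (-p) • !![0, -(n 0); -(n 1), -(n 2)] := by
            nth_rewrite 1 [hXeq]; exact flip_eq _ _ _ _ _
          have hYeq' : Y = Y 0 0 • (1 : Matrix (Fin 2) (Fin 2) ℤ)
              + (-q) • !![0, -(n 0); -(n 1), -(n 2)] := by
            nth_rewrite 1 [hYeq]; exact flip_eq _ _ _ _ _
          exact case3 a b c (X 0 0) (Y 0 0) (-p) (-q) (-(n 0)) (-(n 1)) (-(n 2)) (-g0) v0 X Y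
            ha (neg_ne_zero.mpr hp0) (by simpa [Int.neg_gcd, Int.gcd_neg] using hcop)
            (by linarith) (by linear_combination -hg0D) (by linear_combination hv0)
            (by linear_combination hE1) (by linear_combination -hE2) hXeq' hYeq'
        · exact case3 a b c (X 0 0) (Y 0 0) p q (n 0) (n 1) (n 2) g0 v0 X Y
            ha hp0 hcop hpos hg0D hv0 hE1 hE2 hXeq hYeq
  · rintro (⟨t1, t2, hX, hY, hcond⟩ | ⟨t1, t2, t3, t4, hX, hY, hcond⟩ |
      ⟨t1, t2, t3, t4, u, v, k, g, hu, hg, hX, hY, r1, r2, r3⟩)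
    · subst hX hY
      constructor
      · rw [smul_pow, smul_pow, one_pow, smul_smul, smul_smul, ← add_smul, hcond]
      · simp only [Matrix.smul_mul, Matrix.mul_smul, Matrix.one_mul, Matrix.mul_one]
        match_scalars <;> ring
    · subst hX hY
      constructor
      · ext i j
        fin_cases i <;> fin_cases j <;>
          simp only [pow_two, Matrix.add_apply, Matrix.smul_apply, Matrix.mul_apply,
            Fin.sum_univ_two, Matrix.one_apply, smul_eq_mul, Matrix.cons_val', Matrix.cons_val_zero,
            Matrix.cons_val_one, Matrix.head_cons, Matrix.empty_val', Matrix.cons_val_fin_one,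
            Matrix.head_fin_const] <;> simp <;>
          first | linear_combination hcond | exact Or.inr (by ring)
      · simp only [Matrix.smul_mul, Matrix.mul_smul, Matrix.one_mul, Matrix.mul_one]
    · exact rev3 a b c t1 t2 t3 t4 u v k g X Y hu hg hX hY r1 r2 r3
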